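/- Let ξ be a real random variable with distribution symmetric about 0 and P(ξ > 0) > 0, and let s ∈ (0,1), c > 0. Then E[(e^{-cs ξ} − 1) min{1, e^{c ξ}}] < 0. -/

import Mathlib

open MeasureTheory

private lemma drift_g_nonneg_aux (s c x : ℝ) (hs0 : 0 < s) (hs1 : s < 1) (hc : 0 < c)
    (hx : 0 ≤ x) :
    (Real.exp (-c * s * x) - 1) * min 1 (Real.exp (c * x))
      + (Real.exp (-c * s * (-x)) - 1) * min 1 (Real.exp (c * (-x))) ≤ 0 := by
  have hcs : 0 ≤ c * s * x := mul_nonneg (mul_pos hc hs0).le hx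
  have hcx : 0 ≤ c * x := mul_nonneg hc.le hx
  have hc1s : 0 ≤ c * (1 - s) * x :=
    mul_nonneg (mul_nonneg hc.le (by linarith)) hx
  have h1 : min 1 (Real.exp (c * x)) = 1 := by
    apply min_eq_left
    exact Real.one_le_exp (by positivity)
  have h2 : min 1 (Real.exp (c * (-x))) = Real.exp (c * (-x)) := by
    apply min_eq_right
    exact Real.exp_le_one_iff.mpr (by nlinarith)
  rw [h1, h2]
  set a := Real.exp (-c * s * x) with ha
  set t := Real.exp (-c * s * (-x)) with ht
  set b := Real.exp (c * (-x)) with hb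
  have hat : a * t = 1 := by
    rw [ha, ht, ← Real.exp_add]; ring_nf; exact Real.exp_zero
  have ha0 : 0 < a := Real.exp_pos _
  have hb0 : 0 < b := Real.exp_pos _
  have ha1 : a ≤ 1 := Real.exp_le_one_iff.mpr (by nlinarith)
  have hba : b ≤ a := Real.exp_le_exp.mpr (by nlinarith)
  nlinarith [mul_nonneg (sub_nonneg.2 ha1) (sub_nonneg.2 hba),
    mul_pos hb0 ha0, mul_nonneg hb0.le (sub_nonneg.2 ha1)]

private lemma drift_g_neg_aux (s c x : ℝ) (hs0 : 0 < s) (hs1 : s < 1) (hc : 0 < c)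
    (hx : 0 < x) :
    (Real.exp (-c * s * x) - 1) * min 1 (Real.exp (c * x))
      + (Real.exp (-c * s * (-x)) - 1) * min 1 (Real.exp (c * (-x))) < 0 := by
  have hcs : 0 < c * s * x := mul_pos (mul_pos hc hs0) hx
  have hcx : 0 < c * x := mul_pos hc hx
  have hc1s : 0 < c * (1 - s) * x :=
    mul_pos (mul_pos hc (by linarith)) hx
  have h1 : min 1 (Real.exp (c * x)) = 1 := by
    apply min_eq_left
    exact Real.one_le_exp (by positivity)
  have h2 : min 1 (Real.exp (c * (-x))) = Real.exp (c * (-x)) := by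
    apply min_eq_right
    exact Real.exp_le_one_iff.mpr (by nlinarith)
  rw [h1, h2]
  set a := Real.exp (-c * s * x) with ha
  set t := Real.exp (-c * s * (-x)) with ht
  set b := Real.exp (c * (-x)) with hb
  have hat : a * t = 1 := by
    rw [ha, ht, ← Real.exp_add]; ring_nf; exact Real.exp_zero
  have ha0 : 0 < a := Real.exp_pos _
  have hb0 : 0 < b := Real.exp_pos _
  have ha1 : a < 1 := by
    rw [ha, ← Real.exp_zero]; exact Real.exp_lt_exp.mpr (by nlinarith)
  have hba : b < a := Real.exp_lt_exp.mpr (by nlinarith)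
  nlinarith [mul_pos (sub_pos.2 ha1) (sub_pos.2 hba),
    mul_pos hb0 ha0, mul_pos hb0 (sub_pos.2 ha1)]

/-- If `ξ` is a real random variable with law symmetric about `0` and `P(ξ > 0) > 0`,
and `s ∈ (0,1)`, `c > 0`, then `E[(e^{-csξ} − 1) min{1, e^{cξ}}] < 0`. -/
theorem drift_expectation_neg
    {Ω : Type*} [MeasurableSpace Ω] (μ : Measure Ω) [IsProbabilityMeasure μ]
    (ξ : Ω → ℝ) (hξ : Measurable ξ)
    (hsymm : Measure.map ξ μ = Measure.map (fun ω => -ξ ω) μ)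
    (hpos : 0 < μ {ω | 0 < ξ ω})
    (s c : ℝ) (hs : s ∈ Set.Ioo (0:ℝ) 1) (hc : 0 < c) :
    ∫ ω, (Real.exp (-c * s * ξ ω) - 1) * min 1 (Real.exp (c * ξ ω)) ∂μ < 0 := by
  obtain ⟨hs0, hs1⟩ := hs
  set f : ℝ → ℝ := fun x => (Real.exp (-c * s * x) - 1) * min 1 (Real.exp (c * x)) with hf
  have hfc : Continuous f := by
    apply Continuous.mul
    · exact (Real.continuous_exp.comp (by continuity)).sub continuous_const
    · exact continuous_const.min (Real.continuous_exp.comp (by continuity))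
  have hbound : ∀ x : ℝ, ‖f x‖ ≤ 1 := by
    intro x
    rw [Real.norm_eq_abs, abs_le]
    have hA : 0 < Real.exp (-c * s * x) := Real.exp_pos _
    have hm0 : 0 < min 1 (Real.exp (c * x)) := lt_min one_pos (Real.exp_pos _)
    have hm1 : min 1 (Real.exp (c * x)) ≤ 1 := min_le_left _ _
    constructor
    · simp only [hf]; nlinarith
    · simp only [hf]
      by_cases hx : 0 ≤ x
      · have hA1 : Real.exp (-c * s * x) ≤ 1 := Real.exp_le_one_iff.mpr
          (by nlinarith [mul_nonneg (mul_pos hc hs0).le hx])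
        nlinarith
      · push_neg at hx
        have hE1 : Real.exp (c * x) ≤ 1 := Real.exp_le_one_iff.mpr
          (by nlinarith [mul_pos hc (neg_pos.2 hx)])
        have hmin : min 1 (Real.exp (c * x)) = Real.exp (c * x) := min_eq_right hE1
        rw [hmin]
        have hAE : Real.exp (-c * s * x) * Real.exp (c * x) ≤ 1 := by
          rw [← Real.exp_add]
          exact Real.exp_le_one_iff.mpr
            (by nlinarith [mul_pos (mul_pos hc (by linarith : (0:ℝ) < 1 - s)) (neg_pos.2 hx)])
        have hE0 : 0 < Real.exp (c * x) := Real.exp_pos _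
        nlinarith
  have hint1 : Integrable (fun ω => f (ξ ω)) μ :=
    (integrable_const (1:ℝ)).mono'
      ((hfc.measurable.comp hξ).aestronglyMeasurable)
      (Filter.Eventually.of_forall fun ω => hbound _)
  have hint2 : Integrable (fun ω => f (-ξ ω)) μ :=
    (integrable_const (1:ℝ)).mono'
      ((hfc.measurable.comp hξ.neg).aestronglyMeasurable)
      (Filter.Eventually.of_forall fun ω => hbound _)
  have hmap : ∫ ω, f (ξ ω) ∂μ = ∫ ω, f (-ξ ω) ∂μ := by
    rw [← integral_map hξ.aemeasurable hfc.aestronglyMeasurable, hsymm,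
      integral_map (φ := fun ω => -ξ ω) hξ.neg.aemeasurable hfc.aestronglyMeasurable]
  have hgle : ∀ x : ℝ, f x + f (-x) ≤ 0 := by
    intro x
    simp only [hf]
    rcases le_or_gt 0 x with hx | hx
    · exact drift_g_nonneg_aux s c x hs0 hs1 hc hx
    · have := drift_g_nonneg_aux s c (-x) hs0 hs1 hc (by linarith)
      rw [neg_neg] at this
      linarith
  have hgneg : ∀ x : ℝ, 0 < x → f x + f (-x) < 0 := by
    intro x hx
    simp only [hf]
    exact drift_g_neg_aux s c x hs0 hs1 hc hx
  have hkey : ∫ ω, (f (ξ ω) + f (-ξ ω)) ∂μ < 0 := by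
    by_contra hcon
    push_neg at hcon
    have hle : ∫ ω, (f (ξ ω) + f (-ξ ω)) ∂μ ≤ 0 :=
      integral_nonpos (fun ω => hgle (ξ ω))
    have heq : ∫ ω, -(f (ξ ω) + f (-ξ ω)) ∂μ = 0 := by
      rw [integral_neg]; linarith
    have hnn : 0 ≤ᵐ[μ] (fun ω => -(f (ξ ω) + f (-ξ ω))) :=
      Filter.Eventually.of_forall fun ω => by
        simp only [Pi.zero_apply]
        exact neg_nonneg.2 (hgle (ξ ω))
    have hz : (fun ω => -(f (ξ ω) + f (-ξ ω))) =ᵐ[μ] 0 :=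
      (integral_eq_zero_iff_of_nonneg_ae hnn ((hint1.add hint2).neg)).mp heq
    have hsub : {ω | 0 < ξ ω} ⊆ {ω | ¬ (fun ω => -(f (ξ ω) + f (-ξ ω))) ω = (0:ℝ)} := by
      intro ω hω
      have := hgneg (ξ ω) hω
      simp only [Set.mem_setOf_eq]
      intro h
      nlinarith
    have : μ {ω | 0 < ξ ω} = 0 := by
      refine measure_mono_null hsub ?_
      have h0 := hz
      rw [Filter.EventuallyEq, ae_iff] at h0
      simpa using h0
    exact absurd this (ne_of_gt hpos)
  have hadd : ∫ ω, (f (ξ ω) + f (-ξ ω)) ∂μ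
      = ∫ ω, f (ξ ω) ∂μ + ∫ ω, f (-ξ ω) ∂μ := integral_add hint1 hint2
  have hfin : ∫ ω, f (ξ ω) ∂μ < 0 := by
    rw [hadd, ← hmap] at hkey; linarith
  exact hfin
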